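/- In the setting of the isotropic metric ds² = f(H)dt² − g(H)d\vec{x}² on ℝ⁴, let u : ℝ → ℝ be a smooth solution of u' = −2f'/(3f) − 2f'/(3g), let v = (4/3)·log∘g, and define the symmetric 2-tensor field A on ℝ⁴ by A_{00} = u(H), A_{jj} = v(H) for j = 1,2,3, and A_{μν} = 0 for μ ≠ ν. Let F_{μνλ} = Γ_{μνλ} − Γ_{(μνλ)} be the symmetric-free part of the (η-lowered) Christoffel symbols. Then F = d_G A; explicitly, for all μ, ν, λ ∈ {0,1,2,3}: F_{μνλ} = ½ ∂_μ A_{νλ} − ¼ (∂_ν A_{μλ} + ∂_λ A_{μν}). -/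

import Mathlib

/-- The partial derivative of a function on `ℝ⁴` (or `ℝⁿ`) in the `j`-th coordinate
direction. -/
noncomputable def pdR {n : ℕ} (j : Fin n) (f : (Fin n → ℝ) → ℝ) : (Fin n → ℝ) → ℝ :=
  fun x => fderiv ℝ f x (Pi.single j 1)

/-- The spatial part `(x¹, x², x³)` of a point of `ℝ⁴` (with `x⁰ = t`). -/
def sp (x : Fin 4 → ℝ) : Fin 3 → ℝ := fun j => x j.succ

/-- The diagonal metric components of `ds² = f(H) dt² − g(H) d\vec{x}²`:
`g₀₀ = f(H(x¹,x²,x³))`, `g_jj = −g(H(x¹,x²,x³))` for `j = 1,2,3`, zero off-diagonal. -/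
noncomputable def met (f g : ℝ → ℝ) (H : (Fin 3 → ℝ) → ℝ) (μ ν : Fin 4) :
    (Fin 4 → ℝ) → ℝ :=
  fun x => if μ = ν then (if μ = 0 then f (H (sp x)) else -(g (H (sp x)))) else 0

/-- The inverse metric components: `g⁰⁰ = 1/f(H)`, `g^jj = −1/g(H)`, zero off-diagonal. -/
noncomputable def metInv (f g : ℝ → ℝ) (H : (Fin 3 → ℝ) → ℝ) (μ ν : Fin 4) :
    (Fin 4 → ℝ) → ℝ :=
  fun x => if μ = ν then (if μ = 0 then (f (H (sp x)))⁻¹ else -(g (H (sp x)))⁻¹) else 0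

/-- The flat metric `η = diag(+1, −1, −1, −1)`. -/
noncomputable def eta (μ ν : Fin 4) : ℝ :=
  if μ = ν then (if μ = 0 then 1 else -1) else 0

/-- The Christoffel symbols
`Γ^τ_{νλ} = ½ ∑_ρ g^{τρ} (∂_ν g_{ρλ} + ∂_λ g_{ρν} − ∂_ρ g_{νλ})`. -/
noncomputable def chrUp (f g : ℝ → ℝ) (H : (Fin 3 → ℝ) → ℝ) (τ ν lam : Fin 4) :
    (Fin 4 → ℝ) → ℝ :=
  fun x => (1 / 2 : ℝ) * ∑ ρ : Fin 4, metInv f g H τ ρ x *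
    (pdR ν (met f g H ρ lam) x + pdR lam (met f g H ρ ν) x - pdR ρ (met f g H ν lam) x)

/-- The Christoffel symbols with the upper index lowered by the flat metric `η`:
`Γ_{μνλ} = ∑_τ η_{μτ} Γ^τ_{νλ}`. -/
noncomputable def chrLow (f g : ℝ → ℝ) (H : (Fin 3 → ℝ) → ℝ) (μ ν lam : Fin 4) :
    (Fin 4 → ℝ) → ℝ :=
  fun x => ∑ τ : Fin 4, eta μ τ * chrUp f g H τ ν lam x

/-- The complete symmetrization `Γ_{(μνλ)} = (1/3!) ∑_{σ ∈ Perm(Fin 3)}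
Γ_{μ_{σ(1)} μ_{σ(2)} μ_{σ(3)}}` of a 3-indexed family of functions. -/
noncomputable def symPart (Γ : Fin 4 → Fin 4 → Fin 4 → (Fin 4 → ℝ) → ℝ)
    (μ ν lam : Fin 4) : (Fin 4 → ℝ) → ℝ :=
  fun x => (Nat.factorial 3 : ℝ)⁻¹ * ∑ σ : Equiv.Perm (Fin 3),
    Γ (![μ, ν, lam] (σ 0)) (![μ, ν, lam] (σ 1)) (![μ, ν, lam] (σ 2)) x

/-- The symmetric-free part `F_{μνλ} = Γ_{μνλ} − Γ_{(μνλ)}` of the η-lowered Christoffel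
symbols of the isotropic metric. -/
noncomputable def Fsf (f g : ℝ → ℝ) (H : (Fin 3 → ℝ) → ℝ) (μ ν lam : Fin 4) :
    (Fin 4 → ℝ) → ℝ :=
  fun x => chrLow f g H μ ν lam x - symPart (chrLow f g H) μ ν lam x

/-- The gravitational potential `A = u(H) dt² + v(H) d\vec{x}²`: `A₀₀ = u(H)`,
`A_jj = v(H)` for `j = 1,2,3`, zero off-diagonal. -/
noncomputable def Apot (u v : ℝ → ℝ) (H : (Fin 3 → ℝ) → ℝ) (μ ν : Fin 4) :
    (Fin 4 → ℝ) → ℝ :=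
  fun x => if μ = ν then (if μ = 0 then u (H (sp x)) else v (H (sp x))) else 0


/-! ### Auxiliary material for the proof -/

/-- The spatial projection as a continuous linear map. -/
noncomputable def spL : (Fin 4 → ℝ) →L[ℝ] (Fin 3 → ℝ) :=
  ContinuousLinearMap.pi (fun j => ContinuousLinearMap.proj j.succ)

lemma pdR_comp {H : (Fin 3 → ℝ) → ℝ} (hH : ContDiff ℝ (⊤ : ℕ∞) H)
    {φ : ℝ → ℝ} (μ : Fin 4) (x : Fin 4 → ℝ) (hφ : DifferentiableAt ℝ φ (H (sp x))) :
    pdR μ (fun x => φ (H (sp x))) x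
      = deriv φ (H (sp x)) * fderiv ℝ (fun x => H (sp x)) x (Pi.single μ 1) := by
  have hHd : Differentiable ℝ H := hH.differentiable (by simp)
  have hHs : DifferentiableAt ℝ (fun x : Fin 4 → ℝ => H (sp x)) x :=
    (hHd.differentiableAt).comp x spL.differentiableAt
  have hc : fderiv ℝ (fun x : Fin 4 → ℝ => φ (H (sp x))) x
      = (fderiv ℝ φ (H (sp x))).comp (fderiv ℝ (fun x : Fin 4 → ℝ => H (sp x)) x) :=
    fderiv_comp x hφ hHs
  unfold pdR
  rw [hc, ContinuousLinearMap.comp_apply]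
  set r := fderiv ℝ (fun x : Fin 4 → ℝ => H (sp x)) x (Pi.single μ 1)
  calc fderiv ℝ φ (H (sp x)) r = fderiv ℝ φ (H (sp x)) (r • 1) := by rw [smul_eq_mul, mul_one]
    _ = r • fderiv ℝ φ (H (sp x)) 1 := by rw [map_smul]
    _ = deriv φ (H (sp x)) * r := by rw [fderiv_apply_one_eq_deriv, smul_eq_mul, mul_comm]

lemma D_zero {H : (Fin 3 → ℝ) → ℝ} (hH : ContDiff ℝ (⊤ : ℕ∞) H) (x : Fin 4 → ℝ) :
    fderiv ℝ (fun x : Fin 4 → ℝ => H (sp x)) x (Pi.single 0 1) = 0 := by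
  have hHd : Differentiable ℝ H := hH.differentiable (by simp)
  have hc : fderiv ℝ (fun x : Fin 4 → ℝ => H (sp x)) x
      = (fderiv ℝ H (sp x)).comp (spL : (Fin 4 → ℝ) →L[ℝ] (Fin 3 → ℝ)) := by
    have h1 : fderiv ℝ (H ∘ ⇑spL) x = (fderiv ℝ H (spL x)).comp (fderiv ℝ (⇑spL) x) :=
      fderiv_comp x (hHd.differentiableAt) spL.differentiableAt
    rw [spL.fderiv] at h1
    exact h1
  rw [hc, ContinuousLinearMap.comp_apply]
  have h2 : spL (Pi.single 0 1) = 0 := by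
    funext j
    simp [spL, Pi.single_eq_of_ne (Fin.succ_ne_zero j)]
  rw [h2, map_zero]

lemma permsum {M : Type*} [AddCommMonoid M] (φ : Equiv.Perm (Fin 3) → M) :
    ∑ σ : Equiv.Perm (Fin 3), φ σ =
      φ 1 + φ (Equiv.swap 0 1) + φ (Equiv.swap 0 2) + φ (Equiv.swap 1 2)
      + φ ((Equiv.swap 0 1).trans (Equiv.swap 0 2))
      + φ ((Equiv.swap 0 2).trans (Equiv.swap 0 1)) := by
  have h : (Finset.univ : Finset (Equiv.Perm (Fin 3))) =
      {1, Equiv.swap 0 1, Equiv.swap 0 2, Equiv.swap 1 2,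
        (Equiv.swap 0 1).trans (Equiv.swap 0 2), (Equiv.swap 0 2).trans (Equiv.swap 0 1)} := by
    decide
  rw [h, Finset.sum_insert (by decide), Finset.sum_insert (by decide),
    Finset.sum_insert (by decide), Finset.sum_insert (by decide),
    Finset.sum_insert (by decide), Finset.sum_singleton]
  abel

lemma symPart_eq (Γ : Fin 4 → Fin 4 → Fin 4 → (Fin 4 → ℝ) → ℝ) (μ ν lam : Fin 4)
    (x : Fin 4 → ℝ) :
    symPart Γ μ ν lam x = (6 : ℝ)⁻¹ *
      (Γ μ ν lam x + Γ ν μ lam x + Γ lam ν μ x + Γ μ lam ν x + Γ ν lam μ x + Γ lam μ ν x) := by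
  unfold symPart
  rw [permsum (fun σ => Γ (![μ, ν, lam] (σ 0)) (![μ, ν, lam] (σ 1)) (![μ, ν, lam] (σ 2)) x)]
  simp (config := { decide := true }) [Equiv.swap_apply_def, Equiv.trans_apply, Nat.factorial]

set_option maxHeartbeats 1000000 in

/-- Closed form of the lowered Christoffel symbols of the isotropic metric. -/
noncomputable def chrForm (F G F' G' : ℝ) (D : Fin 4 → ℝ) (a b c : Fin 4) : ℝ :=
  (if a = 0 then (1 : ℝ) else -1) * ((1 / 2 : ℝ) *
    ((if a = 0 then F⁻¹ else -G⁻¹) *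
      ((if a = c then (if a = 0 then F' else -G') else 0) * D b
      + (if a = b then (if a = 0 then F' else -G') else 0) * D c
      - (if b = c then (if b = 0 then F' else -G') else 0) * D a)))

/-- Closed form of the partial derivatives of the potential `A`. -/
noncomputable def dAForm (U' V' : ℝ) (D : Fin 4 → ℝ) (a b c : Fin 4) : ℝ :=
  (if b = c then (if b = 0 then U' else V') else 0) * D a

set_option maxHeartbeats 1000000 in
/-- The key algebraic identity, checked case by case. -/
lemma keyalg (F G F' G' U' V' : ℝ) (D : Fin 4 → ℝ) (hD0 : D 0 = 0)
    (hU : U' = -(2/3 : ℝ) * (F' * F⁻¹) - (2/3 : ℝ) * (F' * G⁻¹))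
    (hV : V' = (4/3 : ℝ) * (G' * G⁻¹)) (μ ν lam : Fin 4) :
    chrForm F G F' G' D μ ν lam - (6 : ℝ)⁻¹ *
      (chrForm F G F' G' D μ ν lam + chrForm F G F' G' D ν μ lam
       + chrForm F G F' G' D lam ν μ + chrForm F G F' G' D μ lam ν
       + chrForm F G F' G' D ν lam μ + chrForm F G F' G' D lam μ ν)
      = (1 / 2 : ℝ) * dAForm U' V' D μ ν lam
        - (1 / 4 : ℝ) * (dAForm U' V' D ν μ lam + dAForm U' V' D lam μ ν) := by
  subst hU hV
  have h4 : ∀ a : Fin 4, a = 0 ∨ a = 1 ∨ a = 2 ∨ a = 3 := by decide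
  rcases h4 μ with rfl|rfl|rfl|rfl <;> rcases h4 ν with rfl|rfl|rfl|rfl <;>
    rcases h4 lam with rfl|rfl|rfl|rfl <;>
    simp only [chrForm, dAForm, Fin.isValue, Fin.reduceEq, reduceIte, hD0, mul_zero, zero_mul,
      mul_one, one_mul, add_zero, zero_add, mul_neg, neg_mul, neg_neg, sub_zero, zero_sub,
      neg_zero, sub_self] <;>
    ring

/-- (Main result of Section 4: `F = d_G A`.)  For the isotropic metric
`ds² = f(H) dt² − g(H) d\vec{x}²` on `ℝ⁴`, with `u` a smooth solution of
`u' = −2f'/(3f) − 2f'/(3g)`, `v = (4/3) log∘g`, and the potential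
`A = u(H) dt² + v(H) d\vec{x}²`, the symmetric-free part `F` of the η-lowered Christoffel
symbols satisfies `F_{μνλ} = ½ ∂_μ A_{νλ} − ¼ (∂_ν A_{μλ} + ∂_λ A_{μν})` for all
`μ, ν, λ ∈ {0,1,2,3}`. -/
theorem stmt14 (H : (Fin 3 → ℝ) → ℝ) (f g : ℝ → ℝ)
    (hH : ContDiff ℝ (⊤ : ℕ∞) H) (hf : ContDiff ℝ (⊤ : ℕ∞) f)
    (hg : ContDiff ℝ (⊤ : ℕ∞) g)
    (hfpos : ∀ t, 0 < f t) (hgpos : ∀ t, 0 < g t)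
    (u : ℝ → ℝ) (hu : ContDiff ℝ (⊤ : ℕ∞) u)
    (hueq : ∀ t, deriv u t = -(2 * deriv f t) / (3 * f t) - (2 * deriv f t) / (3 * g t))
    (v : ℝ → ℝ) (hv : v = fun t => (4 / 3 : ℝ) * Real.log (g t)) :
    ∀ (μ ν lam : Fin 4) (x : Fin 4 → ℝ),
      Fsf f g H μ ν lam x =
        (1 / 2 : ℝ) * pdR μ (Apot u v H ν lam) x -
          (1 / 4 : ℝ) * (pdR ν (Apot u v H μ lam) x + pdR lam (Apot u v H μ ν) x) := by
  intro μ ν lam x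
  have hgne : ∀ t, g t ≠ 0 := fun t => (hgpos t).ne'
  have hfne : ∀ t, f t ≠ 0 := fun t => (hfpos t).ne'
  have hfd : Differentiable ℝ f := hf.differentiable (by simp)
  have hgd : Differentiable ℝ g := hg.differentiable (by simp)
  have hud : Differentiable ℝ u := hu.differentiable (by simp)
  have hvD : ∀ t, HasDerivAt v ((4 / 3 : ℝ) * (deriv g t / g t)) t := fun t => by
    rw [hv]
    exact (((hgd t).hasDerivAt).log (hgne t)).const_mul _
  have hvderiv : ∀ t, deriv v t = (4 / 3 : ℝ) * (deriv g t / g t) := fun t => (hvD t).deriv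
  set D : Fin 4 → ℝ := fun j => fderiv ℝ (fun x => H (sp x)) x (Pi.single j 1) with hDdef
  have hD0 : D 0 = 0 := D_zero hH x
  set h := H (sp x) with hh
  have pdmet : ∀ (a b c : Fin 4), pdR a (met f g H b c) x =
      (if b = c then (if b = 0 then deriv f h else -deriv g h) else 0) * D a := by
    intro a b c
    by_cases hbc : b = c
    · subst hbc
      by_cases hb0 : b = 0
      · subst hb0
        have e : met f g H 0 0 = fun x => f (H (sp x)) := by funext y; simp [met]
        rw [e, pdR_comp hH a x (hfd _)]
        simp [hDdef, hh]
      · have e : met f g H b b = fun x => -(g (H (sp x))) := by funext y; simp [met, hb0]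
        rw [e, pdR_comp hH a x ((hgd _).fun_neg)]
        simp [hb0, deriv.fun_neg, hDdef, hh]
    · have e : met f g H b c = fun _ => (0 : ℝ) := by funext y; simp [met, hbc]
      rw [e]
      simp [pdR, hbc]
  have pdApot : ∀ (a b c : Fin 4), pdR a (Apot u v H b c) x =
      (if b = c then (if b = 0 then deriv u h else deriv v h) else 0) * D a := by
    intro a b c
    by_cases hbc : b = c
    · subst hbc
      by_cases hb0 : b = 0
      · subst hb0
        have e : Apot u v H 0 0 = fun x => u (H (sp x)) := by funext y; simp [Apot]
        rw [e, pdR_comp hH a x (hud _)]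
        simp [hDdef, hh]
      · have e : Apot u v H b b = fun x => v (H (sp x)) := by funext y; simp [Apot, hb0]
        rw [e, pdR_comp hH a x (hvD _).differentiableAt]
        simp [hb0, hDdef, hh]
    · have e : Apot u v H b c = fun _ => (0 : ℝ) := by funext y; simp [Apot, hbc]
      rw [e]
      simp [pdR, hbc]
  have chr : ∀ a b c : Fin 4, chrLow f g H a b c x
      = chrForm (f h) (g h) (deriv f h) (deriv g h) D a b c := by
    intro a b c
    simp only [chrLow, chrUp, metInv, Fin.sum_univ_four, pdmet, eta, ← hh, chrForm]
    have h4 : ∀ a : Fin 4, a = 0 ∨ a = 1 ∨ a = 2 ∨ a = 3 := by decide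
    rcases h4 a with rfl|rfl|rfl|rfl <;> simp
  have hueq' : deriv u h = -(2/3 : ℝ) * (deriv f h * (f h)⁻¹)
      - (2/3 : ℝ) * (deriv f h * (g h)⁻¹) := by
    rw [hueq h]
    field_simp
  have hv' : deriv v h = (4/3 : ℝ) * (deriv g h * (g h)⁻¹) := by
    rw [hvderiv h]
    ring
  have pdA : ∀ a b c : Fin 4, pdR a (Apot u v H b c) x
      = dAForm (deriv u h) (deriv v h) D a b c := by
    intro a b c
    rw [pdApot a b c]
    rfl
  simp only [Fsf, symPart_eq (chrLow f g H) μ ν lam x, chr, pdA]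
  exact keyalg (f h) (g h) (deriv f h) (deriv g h) (deriv u h) (deriv v h) D hD0 hueq' hv' μ ν lam
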